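/- Let n ≥ 26 be even. For any five pairwise distinct subsets of [n] consisting of four sets M₁, M₂, M₃, M₄ each of size exactly n/2 and one set L₁ of size at least n/2 + 1, some four of the five sets form a Berge four-cycle (in some cyclic order). -/
import Mathlib


/-- Four distinct sets `A, B, C, D ⊆ [n]` form a Berge four-cycle in that cyclic order if
there exist pairwise distinct elements `x₁ ∈ A ∩ B`, `x₂ ∈ B ∩ C`, `x₃ ∈ C ∩ D`,
`x₄ ∈ D ∩ A`. -/
def BergeC4 {n : ℕ} (A B C D : Finset (Fin n)) : Prop :=
  A ≠ B ∧ A ≠ C ∧ A ≠ D ∧ B ≠ C ∧ B ≠ D ∧ C ≠ D ∧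
    ∃ x₁ x₂ x₃ x₄ : Fin n,
      x₁ ≠ x₂ ∧ x₁ ≠ x₃ ∧ x₁ ≠ x₄ ∧ x₂ ≠ x₃ ∧ x₂ ≠ x₄ ∧ x₃ ≠ x₄ ∧
      x₁ ∈ A ∩ B ∧ x₂ ∈ B ∩ C ∧ x₃ ∈ C ∩ D ∧ x₄ ∈ D ∩ A

namespace BergeAux

open Finset

variable {n : ℕ}

/-- pick an element of `t` avoiding `s` -/
lemma pick_avoid {α : Type*} [DecidableEq α] {s t : Finset α} (h : s.card < t.card) :
    ∃ x ∈ t, x ∉ s := by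
  have h0 : 0 < (t \ s).card := lt_of_lt_of_le (by omega) (Finset.le_card_sdiff s t)
  obtain ⟨x, hx⟩ := Finset.card_pos.mp h0
  exact ⟨x, (Finset.mem_sdiff.mp hx).1, (Finset.mem_sdiff.mp hx).2⟩

/-- two distinct representatives from two nonempty sets whose union has ≥ 2 elements -/
lemma two_rep {α : Type*} [DecidableEq α] {P Q : Finset α}
    (hP : P.Nonempty) (hQ : Q.Nonempty) (hU : 2 ≤ (P ∪ Q).card) :
    ∃ p ∈ P, ∃ q ∈ Q, p ≠ q := by
  obtain ⟨q, hq⟩ := hQ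
  by_cases h : ∃ p ∈ P, p ≠ q
  · obtain ⟨p, hp, hpq⟩ := h
    exact ⟨p, hp, q, hq, hpq⟩
  · push_neg at h
    obtain ⟨p, hp⟩ := hP
    have hpq : p = q := h p hp
    have hPq : P ⊆ {q} := fun a ha => by simp [h a ha]
    have hPQ : P ∪ Q ⊆ Q :=
      union_subset (hPq.trans (Finset.singleton_subset_iff.mpr hq)) Finset.Subset.rfl
    have h2 : 1 < Q.card := lt_of_lt_of_le (by omega) (le_trans hU (card_le_card hPQ))
    obtain ⟨q', hq', hne⟩ := Finset.exists_mem_ne h2 q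
    exact ⟨p, hp, q', hq', by rw [hpq]; exact hne.symm⟩

/-- build a Berge C4 from three distinct reps plus one big intersection -/
lemma builder {A B C D : Finset (Fin n)}
    (hAB : A ≠ B) (hAC : A ≠ C) (hAD : A ≠ D) (hBC : B ≠ C) (hBD : B ≠ D) (hCD : C ≠ D)
    (h1 : 4 ≤ (A ∩ B).card) {x₂ x₃ x₄ : Fin n}
    (h23 : x₂ ≠ x₃) (h24 : x₂ ≠ x₄) (h34 : x₃ ≠ x₄)
    (m2 : x₂ ∈ B ∩ C) (m3 : x₃ ∈ C ∩ D) (m4 : x₄ ∈ D ∩ A) :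
    BergeC4 A B C D := by
  have h3 : ({x₂, x₃, x₄} : Finset (Fin n)).card ≤ 3 :=
    le_trans (card_insert_le _ _) (Nat.succ_le_succ (le_trans (card_insert_le _ _) (by simp)))
  obtain ⟨x₁, hx₁, hx₁'⟩ :=
    pick_avoid (s := ({x₂, x₃, x₄} : Finset (Fin n))) (t := A ∩ B) (by omega)
  simp only [mem_insert, mem_singleton, not_or] at hx₁'
  exact ⟨hAB, hAC, hAD, hBC, hBD, hCD, x₁, x₂, x₃, x₄,
    hx₁'.1, hx₁'.2.1, hx₁'.2.2, h23, h24, h34, hx₁, m2, m3, m4⟩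

lemma card_inter_lb (L U : Finset (Fin n)) : L.card + U.card ≤ n + (L ∩ U).card := by
  have h1 := Finset.card_inter_add_card_union L U
  have h2 : (L ∪ U).card ≤ n := le_trans (card_le_univ _) (by simp)
  omega

lemma meet_nonempty {m : ℕ} (hn : n = 2 * m) {X Y : Finset (Fin n)}
    (h : 2 * m + 1 ≤ X.card + Y.card) : (X ∩ Y).Nonempty := by
  have := card_inter_lb X Y
  exact Finset.card_pos.mp (by omega)

lemma union_lb {m : ℕ} {X Y : Finset (Fin n)} (hX : X.card = m) (hY : Y.card = m)
    (hne : X ≠ Y) : m + 1 ≤ (X ∪ Y).card := by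
  by_contra h
  push_neg at h
  have e1 : X = X ∪ Y := eq_of_subset_of_card_le subset_union_left (by omega)
  have e2 : Y = X ∪ Y := eq_of_subset_of_card_le subset_union_right (by omega)
  exact hne (e1.trans e2.symm)

lemma two_small {m : ℕ} (hn : n = 2 * m) (hm : 13 ≤ m) {A B C : Finset (Fin n)}
    (hA : A.card = m) (hB : B.card = m) (hC : C.card = m)
    (h1 : (A ∩ B).card ≤ 3) (h2 : (A ∩ C).card ≤ 3) : 4 ≤ (B ∩ C).card := by
  have e1 : (B ∩ A).card + (B \ A).card = B.card := card_inter_add_card_sdiff B A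
  have e2 : (C ∩ A).card + (C \ A).card = C.card := card_inter_add_card_sdiff C A
  have e3 := Finset.card_inter_add_card_union (B \ A) (C \ A)
  have e4 : (B \ A) ∪ (C \ A) ⊆ Aᶜ := by
    intro x hx
    simp only [mem_union, mem_sdiff, mem_compl] at *
    tauto
  have e5 : ((B \ A) ∪ (C \ A)).card ≤ n - m := by
    have := card_le_card e4
    simpa [Finset.card_compl, hA] using this
  have e6 : ((B \ A) ∩ (C \ A)).card ≤ (B ∩ C).card :=
    card_le_card (inter_subset_inter sdiff_subset sdiff_subset)
  have c1 : (B ∩ A).card ≤ 3 := by rw [inter_comm]; exact h1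
  have c2 : (C ∩ A).card ≤ 3 := by rw [inter_comm]; exact h2
  omega

/-- Case 1 : a path of two big intersections among mediums, closed up with `L`. -/
lemma case1 {m : ℕ} (hn : n = 2 * m) (hm : 13 ≤ m)
    {A B C L : Finset (Fin n)}
    (hAB : A ≠ B) (hAC : A ≠ C) (hAL : A ≠ L) (hBC : B ≠ C) (hBL : B ≠ L) (hCL : C ≠ L)
    (hA : A.card = m) (hC : C.card = m) (hL : m + 1 ≤ L.card)
    (h1 : 4 ≤ (A ∩ B).card) (h2 : 4 ≤ (B ∩ C).card) :
    BergeC4 A B C L := by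
  have hu : m + 1 ≤ (C ∪ A).card := union_lb hC hA (Ne.symm hAC)
  have hi : 2 ≤ (L ∩ (C ∪ A)).card := by
    have := card_inter_lb L (C ∪ A); omega
  rw [Finset.inter_union_distrib_left] at hi
  have hLC : (L ∩ C).Nonempty := meet_nonempty hn (by omega)
  have hLA : (L ∩ A).Nonempty := meet_nonempty hn (by omega)
  obtain ⟨x₃, hx₃, x₄, hx₄, h34⟩ := two_rep hLC hLA hi
  have h2' : ({x₃, x₄} : Finset (Fin n)).card ≤ 2 :=
    le_trans (card_insert_le _ _) (by simp)
  obtain ⟨x₂, hx₂, hx₂'⟩ := pick_avoid (s := ({x₃, x₄} : Finset (Fin n))) (t := B ∩ C) (by omega)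
  simp only [mem_insert, mem_singleton, not_or] at hx₂'
  refine builder hAB hAC hAL hBC hBL hCL h1 hx₂'.1 hx₂'.2 h34 hx₂ ?_ ?_
  · rw [inter_comm]; exact hx₃
  · exact hx₄

/-- Case 2, good subcase: two opposite big intersections, cross reps distinct. -/
lemma case2good {A B C D : Finset (Fin n)}
    (hAB : A ≠ B) (hAC : A ≠ C) (hAD : A ≠ D) (hBC : B ≠ C) (hBD : B ≠ D) (hCD : C ≠ D)
    (h1 : 4 ≤ (A ∩ B).card) (h3 : 4 ≤ (C ∩ D).card)
    (hBCn : (B ∩ C).Nonempty) (hDAn : (D ∩ A).Nonempty)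
    (hU : 2 ≤ ((B ∩ C) ∪ (D ∩ A)).card) : BergeC4 A B C D := by
  obtain ⟨x₂, hx₂, x₄, hx₄, h24⟩ := two_rep hBCn hDAn hU
  have h2' : ({x₂, x₄} : Finset (Fin n)).card ≤ 2 :=
    le_trans (card_insert_le _ _) (by simp)
  obtain ⟨x₃, hx₃, hx₃'⟩ := pick_avoid (s := ({x₂, x₄} : Finset (Fin n))) (t := C ∩ D) (by omega)
  simp only [mem_insert, mem_singleton, not_or] at hx₃'
  exact builder hAB hAC hAD hBC hBD hCD h1 (Ne.symm hx₃'.1) h24 hx₃'.2 hx₂ hx₃ hx₄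

/-- Case 2, bad subcase: forced common element `x`, fixed using `L`. -/
lemma case2bad {A B C L : Finset (Fin n)}
    (hAB : A ≠ B) (hAC : A ≠ C) (hAL : A ≠ L) (hBC : B ≠ C) (hBL : B ≠ L) (hCL : C ≠ L)
    (h1 : 4 ≤ (A ∩ B).card) {x : Fin n} (hx : x ∈ B ∩ C)
    (hC1 : (L ∩ C).Nonempty) (hC2 : L ∩ C ≠ {x})
    (hA1 : (L ∩ A).Nonempty) (hA2 : L ∩ A ≠ {x})
    (hU : 3 ≤ (L ∩ (C ∪ A)).card) : BergeC4 A B C L := by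
  have hQ3 : ((L ∩ C) \ {x}).Nonempty := by
    rw [Finset.sdiff_nonempty]
    intro hsub
    rcases Finset.subset_singleton_iff.mp hsub with h | h
    · exact hC1.ne_empty h
    · exact hC2 h
  have hQ4 : ((L ∩ A) \ {x}).Nonempty := by
    rw [Finset.sdiff_nonempty]
    intro hsub
    rcases Finset.subset_singleton_iff.mp hsub with h | h
    · exact hA1.ne_empty h
    · exact hA2 h
  have hUQ : 2 ≤ (((L ∩ C) \ {x}) ∪ ((L ∩ A) \ {x})).card := by
    have e : ((L ∩ C) \ {x}) ∪ ((L ∩ A) \ {x}) = (L ∩ (C ∪ A)) \ {x} := by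
      rw [Finset.inter_union_distrib_left, Finset.union_sdiff_distrib]
    rw [e]
    have h5 : (L ∩ (C ∪ A)).card ≤ ((L ∩ (C ∪ A)) \ {x}).card + 1 := by
      have hsub : L ∩ (C ∪ A) ⊆ ((L ∩ (C ∪ A)) \ {x}) ∪ {x} := by
        intro a ha
        simp only [mem_union, mem_sdiff, mem_singleton]
        by_cases hax : a = x
        · exact Or.inr hax
        · exact Or.inl ⟨ha, hax⟩
      calc (L ∩ (C ∪ A)).card ≤ (((L ∩ (C ∪ A)) \ {x}) ∪ {x}).card := card_le_card hsub
        _ ≤ ((L ∩ (C ∪ A)) \ {x}).card + 1 := le_trans (card_union_le _ _) (by simp)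
    omega
  obtain ⟨x₃, hx₃, x₄, hx₄, h34⟩ := two_rep hQ3 hQ4 hUQ
  have hx₃m := Finset.mem_sdiff.mp hx₃
  have hx₄m := Finset.mem_sdiff.mp hx₄
  have hx₃x : x₃ ≠ x := by simpa using hx₃m.2
  have hx₄x : x₄ ≠ x := by simpa using hx₄m.2
  refine builder hAB hAC hAL hBC hBL hCL h1 hx₃x.symm hx₄x.symm h34 hx ?_ ?_
  · rw [inter_comm]; exact hx₃m.1
  · exact hx₄m.1

/-- Matching case: big pairs A-B and C-D, crossing pairs A-D and B-C small,
nonempty cross matching A-C, B-D. -/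
lemma matched {m : ℕ} (hn : n = 2 * m) (hm : 13 ≤ m)
    {A B C D L : Finset (Fin n)}
    (dAB : A ≠ B) (dAC : A ≠ C) (dAD : A ≠ D) (dAL : A ≠ L)
    (dBC : B ≠ C) (dBD : B ≠ D) (dBL : B ≠ L)
    (dCD : C ≠ D) (dCL : C ≠ L) (dDL : D ≠ L)
    (hA : A.card = m) (hB : B.card = m) (hC : C.card = m) (hD : D.card = m)
    (hL : m + 1 ≤ L.card)
    (h1 : 4 ≤ (A ∩ B).card) (h2 : 4 ≤ (C ∩ D).card)
    (sAD : (A ∩ D).card ≤ 3) (sBC : (B ∩ C).card ≤ 3)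
    (mAC : (A ∩ C).Nonempty) (mBD : (B ∩ D).Nonempty) :
    BergeC4 A B D C ∨ BergeC4 A B D L ∨ BergeC4 B A C L := by
  have mCA : (C ∩ A).Nonempty := by rwa [inter_comm]
  by_cases hU : 2 ≤ ((B ∩ D) ∪ (C ∩ A)).card
  · left
    exact case2good dAB dAD dAC dBD dBC (Ne.symm dCD) h1
      (by rwa [inter_comm]) mBD mCA hU
  · -- B ∩ D = C ∩ A = {x}
    have hne : ((B ∩ D) ∪ (C ∩ A)).Nonempty := mBD.mono subset_union_left
    have hc1 : ((B ∩ D) ∪ (C ∩ A)).card = 1 := by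
      have := hne.card_pos; omega
    obtain ⟨x, hxU⟩ := Finset.card_eq_one.mp hc1
    have hBDx : B ∩ D = {x} := by
      have hsub : B ∩ D ⊆ {x} := hxU ▸ subset_union_left
      rcases Finset.subset_singleton_iff.mp hsub with h | h
      · exact absurd h mBD.ne_empty
      · exact h
    have hCAx : C ∩ A = {x} := by
      have hsub : C ∩ A ⊆ {x} := hxU ▸ subset_union_right
      rcases Finset.subset_singleton_iff.mp hsub with h | h
      · exact absurd h mCA.ne_empty
      · exact h
    have hxBD : x ∈ B ∩ D := hBDx ▸ Finset.mem_singleton_self x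
    have hxCA : x ∈ C ∩ A := hCAx ▸ Finset.mem_singleton_self x
    have LA : (L ∩ A).Nonempty := meet_nonempty hn (by omega)
    have LB : (L ∩ B).Nonempty := meet_nonempty hn (by omega)
    have LC : (L ∩ C).Nonempty := meet_nonempty hn (by omega)
    have LD : (L ∩ D).Nonempty := meet_nonempty hn (by omega)
    have key : ∀ X Y : Finset (Fin n), X.card = m → Y.card = m → X ≠ Y →
        L ∩ X = {x} → L ∩ Y = {x} → False := by
      intro X Y hX hY hXY e1 e2
      have hu : m + 1 ≤ (X ∪ Y).card := union_lb hX hY hXY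
      have hi : 2 ≤ (L ∩ (X ∪ Y)).card := by
        have := card_inter_lb L (X ∪ Y); omega
      rw [Finset.inter_union_distrib_left, e1, e2] at hi
      simp at hi
    by_cases hα : L ∩ D = {x} ∨ L ∩ A = {x}
    · right; right
      have hCne : L ∩ C ≠ {x} := by
        intro e
        rcases hα with e' | e'
        · exact key D C hD hC (Ne.symm dCD) e' e
        · exact key A C hA hC dAC e' e
      have hBne : L ∩ B ≠ {x} := by
        intro e
        rcases hα with e' | e'
        · exact key D B hD hB (Ne.symm dBD) e' e
        · exact key A B hA hB dAB e' e
      have hxAC : x ∈ A ∩ C := by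
        rw [inter_comm]; exact hxCA
      have hCuB : 3 ≤ (L ∩ (C ∪ B)).card := by
        have e := Finset.card_inter_add_card_union C B
        have ccb : (C ∩ B).card ≤ 3 := by rw [inter_comm]; exact sBC
        have := card_inter_lb L (C ∪ B)
        omega
      exact case2bad (Ne.symm dAB) dBC dBL dAC dAL dCL
        (by rwa [inter_comm]) hxAC LC hCne LB hBne hCuB
    · right; left
      push_neg at hα
      have hDuA : 3 ≤ (L ∩ (D ∪ A)).card := by
        have e := Finset.card_inter_add_card_union D A
        have cda : (D ∩ A).card ≤ 3 := by rw [inter_comm]; exact sAD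
        have := card_inter_lb L (D ∪ A)
        omega
      exact case2bad dAB dAD dAL dBD dBL dDL h1 hxBD LD hα.1 LA hα.2 hDuA

/-- The full matching configuration, with conclusion packaged inside a set `S`. -/
lemma config {m : ℕ} (hn : n = 2 * m) (hm : 13 ≤ m)
    {S : Set (Finset (Fin n))} {A B C D L : Finset (Fin n)}
    (mA : A ∈ S) (mB : B ∈ S) (mC : C ∈ S) (mD : D ∈ S) (mL : L ∈ S)
    (dAB : A ≠ B) (dAC : A ≠ C) (dAD : A ≠ D) (dAL : A ≠ L)
    (dBC : B ≠ C) (dBD : B ≠ D) (dBL : B ≠ L)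
    (dCD : C ≠ D) (dCL : C ≠ L) (dDL : D ≠ L)
    (hA : A.card = m) (hB : B.card = m) (hC : C.card = m) (hD : D.card = m)
    (hL : m + 1 ≤ L.card)
    (h1 : 4 ≤ (A ∩ B).card) (h2 : 4 ≤ (C ∩ D).card)
    (sAC : (A ∩ C).card ≤ 3) (sAD : (A ∩ D).card ≤ 3)
    (sBC : (B ∩ C).card ≤ 3) (sBD : (B ∩ D).card ≤ 3) :
    ∃ W ∈ S, ∃ X ∈ S, ∃ Y ∈ S, ∃ Z ∈ S, BergeC4 W X Y Z := by
  have hCD' : m + 1 ≤ (C ∪ D).card := union_lb hC hD dCD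
  have hAB' : m + 1 ≤ (A ∪ B).card := union_lb hA hB dAB
  have tA : (A ∩ (C ∪ D)).Nonempty := meet_nonempty hn (by omega)
  have tB : (B ∩ (C ∪ D)).Nonempty := meet_nonempty hn (by omega)
  have tC : (C ∩ (A ∪ B)).Nonempty := meet_nonempty hn (by omega)
  have tD : (D ∩ (A ∪ B)).Nonempty := meet_nonempty hn (by omega)
  rw [Finset.inter_union_distrib_left] at tA tB tC tD
  by_cases pAC : (A ∩ C).Nonempty
  · by_cases pBD : (B ∩ D).Nonempty
    · rcases matched hn hm dAB dAC dAD dAL dBC dBD dBL dCD dCL dDL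
        hA hB hC hD hL h1 h2 sAD sBC pAC pBD with h | h | h
      · exact ⟨A, mA, B, mB, D, mD, C, mC, h⟩
      · exact ⟨A, mA, B, mB, D, mD, L, mL, h⟩
      · exact ⟨B, mB, A, mA, C, mC, L, mL, h⟩
    · -- B ∩ D empty, so B ∩ C nonempty; and D ∩ A nonempty hence A ∩ D nonempty
      have hBD0 : B ∩ D = ∅ := Finset.not_nonempty_iff_eq_empty.mp pBD
      have pBC : (B ∩ C).Nonempty := by
        rcases tB with ⟨y, hy⟩
        rcases Finset.mem_union.mp hy with h | h
        · exact ⟨y, h⟩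
        · exact absurd h (by simp [hBD0])
      have pAD : (A ∩ D).Nonempty := by
        rcases tD with ⟨y, hy⟩
        rcases Finset.mem_union.mp hy with h | h
        · exact ⟨y, by rw [inter_comm]; exact h⟩
        · exfalso
          have : y ∈ B ∩ D := by rw [inter_comm]; exact h
          simp [hBD0] at this
      rcases matched hn hm dAB dAD dAC dAL dBD dBC dBL (Ne.symm dCD) dDL dCL
        hA hB hD hC hL h1 (by rwa [inter_comm]) sAC sBD pAD pBC with h | h | h
      · exact ⟨A, mA, B, mB, C, mC, D, mD, h⟩
      · exact ⟨A, mA, B, mB, C, mC, L, mL, h⟩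
      · exact ⟨B, mB, A, mA, D, mD, L, mL, h⟩
  · -- A ∩ C empty, so A ∩ D nonempty and B ∩ C nonempty
    have hAC0 : A ∩ C = ∅ := Finset.not_nonempty_iff_eq_empty.mp pAC
    have pAD : (A ∩ D).Nonempty := by
      rcases tA with ⟨y, hy⟩
      rcases Finset.mem_union.mp hy with h | h
      · exact absurd h (by simp [hAC0])
      · exact ⟨y, h⟩
    have pBC : (B ∩ C).Nonempty := by
      rcases tC with ⟨y, hy⟩
      rcases Finset.mem_union.mp hy with h | h
      · exfalso
        have : y ∈ A ∩ C := by rw [inter_comm]; exact h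
        simp [hAC0] at this
      · exact ⟨y, by rw [inter_comm]; exact h⟩
    rcases matched hn hm dAB dAD dAC dAL dBD dBC dBL (Ne.symm dCD) dDL dCL
      hA hB hD hC hL h1 (by rwa [inter_comm]) sAC sBD pAD pBC with h | h | h
    · exact ⟨A, mA, B, mB, C, mC, D, mD, h⟩
    · exact ⟨A, mA, B, mB, C, mC, L, mL, h⟩
    · exact ⟨B, mB, A, mA, D, mD, L, mL, h⟩

end BergeAux

/-- For even `n ≥ 26`, among any five pairwise distinct subsets of `[n]` consisting of
four sets of size exactly `n / 2` and one set of size at least `n / 2 + 1`, some four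
form a Berge four-cycle in some cyclic order. -/
theorem four_medium_one_large_C4 (n : ℕ) (hn : 26 ≤ n) (hev : Even n)
    (M₁ M₂ M₃ M₄ L₁ : Finset (Fin n))
    (hd : [M₁, M₂, M₃, M₄, L₁].Pairwise (· ≠ ·))
    (hM₁ : M₁.card = n / 2) (hM₂ : M₂.card = n / 2)
    (hM₃ : M₃.card = n / 2) (hM₄ : M₄.card = n / 2)
    (hL₁ : n / 2 + 1 ≤ L₁.card) :
    ∃ A ∈ ({M₁, M₂, M₃, M₄, L₁} : Set (Finset (Fin n))),
      ∃ B ∈ ({M₁, M₂, M₃, M₄, L₁} : Set (Finset (Fin n))),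
        ∃ C ∈ ({M₁, M₂, M₃, M₄, L₁} : Set (Finset (Fin n))),
          ∃ D ∈ ({M₁, M₂, M₃, M₄, L₁} : Set (Finset (Fin n))),
            BergeC4 A B C D := by
  classical
  open BergeAux in
  obtain ⟨m, hm2⟩ := hev
  have hn2 : n = 2 * m := by omega
  have hm13 : 13 ≤ m := by omega
  have hdiv : n / 2 = m := by omega
  rw [hdiv] at hM₁ hM₂ hM₃ hM₄ hL₁
  obtain ⟨p1, hd⟩ := List.pairwise_cons.mp hd
  obtain ⟨p2, hd⟩ := List.pairwise_cons.mp hd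
  obtain ⟨p3, hd⟩ := List.pairwise_cons.mp hd
  obtain ⟨p4, -⟩ := List.pairwise_cons.mp hd
  have d12 : M₁ ≠ M₂ := p1 M₂ (by simp)
  have d13 : M₁ ≠ M₃ := p1 M₃ (by simp)
  have d14 : M₁ ≠ M₄ := p1 M₄ (by simp)
  have d1L : M₁ ≠ L₁ := p1 L₁ (by simp)
  have d23 : M₂ ≠ M₃ := p2 M₃ (by simp)
  have d24 : M₂ ≠ M₄ := p2 M₄ (by simp)
  have d2L : M₂ ≠ L₁ := p2 L₁ (by simp)
  have d34 : M₃ ≠ M₄ := p3 M₄ (by simp)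
  have d3L : M₃ ≠ L₁ := p3 L₁ (by simp)
  have d4L : M₄ ≠ L₁ := p4 L₁ (by simp)
  have mem1 : M₁ ∈ ({M₁, M₂, M₃, M₄, L₁} : Set (Finset (Fin n))) := by simp
  have mem2 : M₂ ∈ ({M₁, M₂, M₃, M₄, L₁} : Set (Finset (Fin n))) := by simp
  have mem3 : M₃ ∈ ({M₁, M₂, M₃, M₄, L₁} : Set (Finset (Fin n))) := by simp
  have mem4 : M₄ ∈ ({M₁, M₂, M₃, M₄, L₁} : Set (Finset (Fin n))) := by simp
  have memL : L₁ ∈ ({M₁, M₂, M₃, M₄, L₁} : Set (Finset (Fin n))) := by simp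
  by_cases h12 : 4 ≤ (M₁ ∩ M₂).card
  · by_cases h13 : 4 ≤ (M₁ ∩ M₃).card
    · exact ⟨M₂, mem2, M₁, mem1, M₃, mem3, L₁, memL,
        case1 hn2 hm13 (Ne.symm d12) d23 d2L d13 d1L d3L hM₂ hM₃ hL₁
          (by rwa [Finset.inter_comm]) h13⟩
    · by_cases h14 : 4 ≤ (M₁ ∩ M₄).card
      · exact ⟨M₂, mem2, M₁, mem1, M₄, mem4, L₁, memL,
          case1 hn2 hm13 (Ne.symm d12) d24 d2L d14 d1L d4L hM₂ hM₄ hL₁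
            (by rwa [Finset.inter_comm]) h14⟩
      · have big34 : 4 ≤ (M₃ ∩ M₄).card :=
          two_small hn2 hm13 hM₁ hM₃ hM₄ (by omega) (by omega)
        by_cases h23 : 4 ≤ (M₂ ∩ M₃).card
        · exact ⟨M₂, mem2, M₃, mem3, M₄, mem4, L₁, memL,
            case1 hn2 hm13 d23 d24 d2L d34 d3L d4L hM₂ hM₄ hL₁ h23 big34⟩
        · by_cases h24 : 4 ≤ (M₂ ∩ M₄).card
          · exact ⟨M₂, mem2, M₄, mem4, M₃, mem3, L₁, memL,
              case1 hn2 hm13 d24 d23 d2L (Ne.symm d34) d4L d3L hM₂ hM₃ hL₁ h24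
                (by rwa [Finset.inter_comm])⟩
          · exact config hn2 hm13 mem1 mem2 mem3 mem4 memL
              d12 d13 d14 d1L d23 d24 d2L d34 d3L d4L
              hM₁ hM₂ hM₃ hM₄ hL₁ h12 big34
              (by omega) (by omega) (by omega) (by omega)
  · by_cases h13 : 4 ≤ (M₁ ∩ M₃).card
    · by_cases h14 : 4 ≤ (M₁ ∩ M₄).card
      · exact ⟨M₃, mem3, M₁, mem1, M₄, mem4, L₁, memL,
          case1 hn2 hm13 (Ne.symm d13) d34 d3L d14 d1L d4L hM₃ hM₄ hL₁
            (by rwa [Finset.inter_comm]) h14⟩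
      · have big24 : 4 ≤ (M₂ ∩ M₄).card :=
          two_small hn2 hm13 hM₁ hM₂ hM₄ (by omega) (by omega)
        by_cases h23 : 4 ≤ (M₂ ∩ M₃).card
        · exact ⟨M₃, mem3, M₂, mem2, M₄, mem4, L₁, memL,
            case1 hn2 hm13 (Ne.symm d23) d34 d3L d24 d2L d4L hM₃ hM₄ hL₁
              (by rwa [Finset.inter_comm]) big24⟩
        · by_cases h34 : 4 ≤ (M₃ ∩ M₄).card
          · exact ⟨M₂, mem2, M₄, mem4, M₃, mem3, L₁, memL,
              case1 hn2 hm13 d24 d23 d2L (Ne.symm d34) d4L d3L hM₂ hM₃ hL₁ big24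
                (by rwa [Finset.inter_comm])⟩
          · exact config hn2 hm13 mem1 mem3 mem2 mem4 memL
              d13 d12 d14 d1L (Ne.symm d23) d34 d3L d24 d2L d4L
              hM₁ hM₃ hM₂ hM₄ hL₁ h13 big24
              (by omega) (by omega) (by rw [Finset.inter_comm]; omega) (by omega)
    · have big23 : 4 ≤ (M₂ ∩ M₃).card :=
        two_small hn2 hm13 hM₁ hM₂ hM₃ (by omega) (by omega)
      by_cases h14 : 4 ≤ (M₁ ∩ M₄).card
      · by_cases h24 : 4 ≤ (M₂ ∩ M₄).card
        · exact ⟨M₃, mem3, M₂, mem2, M₄, mem4, L₁, memL,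
            case1 hn2 hm13 (Ne.symm d23) d34 d3L d24 d2L d4L hM₃ hM₄ hL₁
              (by rwa [Finset.inter_comm]) h24⟩
        · by_cases h34 : 4 ≤ (M₃ ∩ M₄).card
          · exact ⟨M₂, mem2, M₃, mem3, M₄, mem4, L₁, memL,
              case1 hn2 hm13 d23 d24 d2L d34 d3L d4L hM₂ hM₄ hL₁ big23 h34⟩
          · exact config hn2 hm13 mem1 mem4 mem2 mem3 memL
              d14 d12 d13 d1L (Ne.symm d24) (Ne.symm d34) d4L d23 d2L d3L
              hM₁ hM₄ hM₂ hM₃ hL₁ h14 big23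
              (by omega) (by omega) (by rw [Finset.inter_comm]; omega)
              (by rw [Finset.inter_comm]; omega)
      · have big24 : 4 ≤ (M₂ ∩ M₄).card :=
          two_small hn2 hm13 hM₁ hM₂ hM₄ (by omega) (by omega)
        exact ⟨M₃, mem3, M₂, mem2, M₄, mem4, L₁, memL,
          case1 hn2 hm13 (Ne.symm d23) d34 d3L d24 d2L d4L hM₃ hM₄ hL₁
            (by rwa [Finset.inter_comm]) big24⟩
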